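/- Let v_L > 0, y_L < 0, y_L² > 4v_L, let λ₁(U_L) = (−y_L − √(y_L²−4v_L))/(2v_L²) and λ₂(U_L) = (−y_L + √(y_L²−4v_L))/(2v_L²), and let s satisfy 0 < s < λ₁(U_L). Set W_L = (w₁, w₂) = (y_L/v_L − s·v_L, 1/v_L − s·y_L), and fix E with v_L·λ₁(U_L) < E < v_L·λ₂(U_L). Define φ₁(v) = y_L − E(v − v_L) and φ₂(v) = (1/s)(1/v − 1/v_L) + y_L, and let R = {(v, y) : 0 < v ≤ v_L and (y − φ₁(v))(y − φ₂(v)) ≤ 0} (the curvilinear region to the left of U_L = (v_L, y_L) bounded by the two curves, both of which pass through U_L). Then R is negatively invariant for the planar ODE v′ = y/v − s·v − w₁, y′ = 1/v − s·y − w₂: for every solution (v, y) : [t₀, t₁] → {v > 0} of this ODE with (v(t₁), y(t₁)) ∈ R, one has (v(t), y(t)) ∈ R for all t ∈ [t₀, t₁]. -/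

import Mathlib

open Set Filter Topology

private lemma right_deriv_nonneg {h : ℝ → ℝ} {d a b : ℝ} (hab : a < b)
    (hd : HasDerivAt h d a) (hmin : ∀ u ∈ Set.Ioc a b, h a ≤ h u) : 0 ≤ d := by
  have H : Filter.Tendsto (slope h a) (𝓝[Set.Ioi a \ {a}] a) (𝓝 d) :=
    hasDerivWithinAt_iff_tendsto_slope.1 (hd.hasDerivWithinAt (s := Set.Ioi a))
  rw [Set.diff_singleton_eq_self (by simp)] at H
  refine ge_of_tendsto H ?_
  filter_upwards [Ioc_mem_nhdsGT hab] with u hu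
  rw [slope_def_field]
  have h1 := hmin u hu
  have h2 : 0 < u - a := sub_pos.2 hu.1
  exact div_nonneg (by linarith) h2.le

/-- First characteristic speed. -/
noncomputable def lam1 (v y : ℝ) : ℝ := (-y - Real.sqrt (y ^ 2 - 4 * v)) / (2 * v ^ 2)

/-- Second characteristic speed. -/
noncomputable def lam2 (v y : ℝ) : ℝ := (-y + Real.sqrt (y ^ 2 - 4 * v)) / (2 * v ^ 2)

set_option maxHeartbeats 1000000 in
theorem stmt17 (vL yL s E w1 w2 : ℝ)
    (hvL : 0 < vL) (hyL : yL < 0) (hL : yL ^ 2 > 4 * vL)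
    (hs0 : 0 < s) (hs1 : s < lam1 vL yL)
    (hw1 : w1 = yL / vL - s * vL) (hw2 : w2 = 1 / vL - s * yL)
    (hE1 : vL * lam1 vL yL < E) (hE2 : E < vL * lam2 vL yL) :
    ∀ (t0 t1 : ℝ) (V Y : ℝ → ℝ),
      (∀ t ∈ Set.Icc t0 t1, 0 < V t) →
      (∀ t ∈ Set.Icc t0 t1, HasDerivAt V (Y t / V t - s * V t - w1) t) →
      (∀ t ∈ Set.Icc t0 t1, HasDerivAt Y (1 / V t - s * Y t - w2) t) →
      (V t1 ≤ vL ∧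
        (Y t1 - (yL - E * (V t1 - vL))) *
          (Y t1 - ((1 / s) * (1 / V t1 - 1 / vL) + yL)) ≤ 0) →
      ∀ t ∈ Set.Icc t0 t1,
        V t ≤ vL ∧
        (Y t - (yL - E * (V t - vL))) *
          (Y t - ((1 / s) * (1 / V t - 1 / vL) + yL)) ≤ 0 := by
  intro t0 t1 V Y hVpos hVder hYder hinit
  by_cases ht01 : t0 ≤ t1
  swap
  · intro t ht
    exact absurd (le_trans ht.1 ht.2) ht01
  have hIt1 : t1 ∈ Set.Icc t0 t1 := Set.right_mem_Icc.2 ht01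
  simp only [lam1, lam2] at hs1 hE1 hE2
  set D := Real.sqrt (yL ^ 2 - 4 * vL) with hDdef
  have hD2 : D ^ 2 = yL ^ 2 - 4 * vL := Real.sq_sqrt (by linarith)
  have hDpos : 0 < D := Real.sqrt_pos.2 (by linarith)
  have hDyL : D < -yL := by
    by_contra h
    push_neg at h
    have := pow_le_pow_left₀ (by linarith : (0:ℝ) ≤ -yL) h 2
    nlinarith
  have h2vL2 : (0:ℝ) < 2 * vL ^ 2 := by positivity
  have hs1' : s * (2 * vL ^ 2) < -yL - D := (lt_div_iff₀ h2vL2).1 hs1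
  have hE1' : -yL - D < E * (2 * vL) := by
    have h' : vL * ((-yL - D) / (2 * vL ^ 2)) = (-yL - D) / (2 * vL) := by
      field_simp
    rw [h'] at hE1
    exact (div_lt_iff₀ (by positivity)).1 hE1
  have hE2' : E * (2 * vL) < -yL + D := by
    have h' : vL * ((-yL + D) / (2 * vL ^ 2)) = (-yL + D) / (2 * vL) := by
      field_simp
    rw [h'] at hE2
    exact (lt_div_iff₀ (by positivity)).1 hE2
  have hEpos : 0 < E := by nlinarith
  have key1 : vL * E ^ 2 + yL * E + 1 < 0 := by
    nlinarith [mul_pos (by linarith : (0:ℝ) < E * (2 * vL) + yL + D)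
      (by linarith : (0:ℝ) < D - (E * (2 * vL) + yL)), hvL]
  have qvL : 0 < s ^ 2 * vL ^ 3 + s * yL * vL + 1 := by
    nlinarith [mul_pos (by nlinarith : (0:ℝ) < -(s * (2 * vL ^ 2) + yL) - D)
      (by nlinarith : (0:ℝ) < -(s * (2 * vL ^ 2) + yL) + D), hvL]
  have key2 : ∀ v : ℝ, 0 < v → v ≤ vL → 0 < s ^ 2 * vL * v ^ 2 + s * yL * v + 1 := by
    intro v hv hvle
    have h1 : (0:ℝ) ≤ s * vL * (vL - v) :=
      mul_nonneg (mul_nonneg hs0.le hvL.le) (sub_nonneg.2 hvle)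
    have h2 : (0:ℝ) ≤ -(s * vL * (v + vL) + yL) := by nlinarith
    nlinarith [mul_nonneg (mul_nonneg (sub_nonneg.2 hvle) hs0.le) h2]
  -- continuity
  have hVc : ContinuousOn V (Set.Icc t0 t1) :=
    fun u hu => (hVder u hu).continuousAt.continuousWithinAt
  have hYc : ContinuousOn Y (Set.Icc t0 t1) :=
    fun u hu => (hYder u hu).continuousAt.continuousWithinAt
  have hVne : ∀ u ∈ Set.Icc t0 t1, V u ≠ 0 := fun u hu => (hVpos u hu).ne'
  -- the three barrier functions
  obtain ⟨A, hA⟩ : ∃ A : ℝ → ℝ, A = fun u => vL - V u := ⟨_, rfl⟩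
  obtain ⟨B, hB⟩ : ∃ B : ℝ → ℝ, B = fun u => Y u - yL + E * (V u - vL) := ⟨_, rfl⟩
  obtain ⟨C, hC⟩ : ∃ C : ℝ → ℝ, C = fun u => (1/s) * (1/V u - 1/vL) + yL - Y u := ⟨_, rfl⟩
  have hAc : ContinuousOn A (Set.Icc t0 t1) := by
    rw [hA]; exact continuousOn_const.sub hVc
  have hBc : ContinuousOn B (Set.Icc t0 t1) := by
    rw [hB]
    exact (hYc.sub continuousOn_const).add (continuousOn_const.mul (hVc.sub continuousOn_const))
  have hCc : ContinuousOn C (Set.Icc t0 t1) := by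
    rw [hC]
    exact ((continuousOn_const.mul ((continuousOn_const.div hVc hVne).sub
      continuousOn_const)).add continuousOn_const).sub hYc
  -- derivatives of the barrier functions
  have hAder : ∀ u ∈ Set.Icc t0 t1,
      HasDerivAt A (-(B u / V u + A u * ((E * vL + yL) / (vL * V u) + s))) u := by
    intro u hu
    have hv := hVpos u hu
    simp only [hA, hB]
    have h := (hVder u hu).const_sub vL
    refine h.congr_deriv ?_
    rw [hw1]; field_simp; ring
  have hBder : ∀ u ∈ Set.Icc t0 t1,
      HasDerivAt B (-((-(vL * E ^ 2 + yL * E + 1) / (V u * vL)) * A u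
        + (s - E / V u) * B u)) u := by
    intro u hu
    have hv := hVpos u hu
    simp only [hA, hB]
    have h := ((hYder u hu).sub_const yL).add (((hVder u hu).sub_const vL).const_mul E)
    refine h.congr_deriv ?_
    rw [hw1, hw2]; field_simp; ring
  have hCder : ∀ u ∈ Set.Icc t0 t1,
      HasDerivAt C (-(((s ^ 2 * vL * (V u) ^ 2 + s * yL * V u + 1) /
        (s ^ 2 * (V u) ^ 4 * vL)) * A u + (s - 1 / (s * (V u) ^ 3)) * C u)) u := by
    intro u hu
    have hv := hVpos u hu
    simp only [hA, hC]
    have h0 : HasDerivAt (fun x => 1 / V x) (-(Y u / V u - s * V u - w1) / (V u) ^ 2) u := by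
      have h0' := (hVder u hu).inv hv.ne'
      simp only [one_div]
      exact h0'
    have h := (((h0.sub_const (1/vL)).const_mul (1/s)).add_const yL).sub (hYder u hu)
    refine h.congr_deriv ?_
    rw [hw1, hw2]; field_simp; ring
  -- bound function
  obtain ⟨GG, hGG⟩ : ∃ GG : ℝ → ℝ, GG = fun v =>
      1 / v + |(E * vL + yL) / (vL * v) + s| + -(vL * E ^ 2 + yL * E + 1) / (v * vL)
      + |s - E / v| + |(s ^ 2 * vL * v ^ 2 + s * yL * v + 1) / (s ^ 2 * v ^ 4 * vL)|
      + |s - 1 / (s * v ^ 3)| := ⟨_, rfl⟩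
  have hGGcont : ContinuousOn (fun u => GG (V u)) (Set.Icc t0 t1) := by
    simp only [hGG]
    refine (((((continuousOn_const.div hVc hVne).add ?_).add ?_).add ?_).add ?_).add ?_
    · exact ((continuousOn_const.div (continuousOn_const.mul hVc)
        (fun u hu => mul_ne_zero hvL.ne' (hVne u hu))).add continuousOn_const).abs
    · exact continuousOn_const.div (hVc.mul continuousOn_const)
        (fun u hu => mul_ne_zero (hVne u hu) hvL.ne')
    · exact (continuousOn_const.sub (continuousOn_const.div hVc hVne)).abs
    · refine (ContinuousOn.div ?_ ?_ ?_).abs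
      · exact ((continuousOn_const.mul (hVc.pow 2)).add
          ((continuousOn_const.mul hVc))).add continuousOn_const
      · exact (continuousOn_const.mul (hVc.pow 4)).mul continuousOn_const
      · exact fun u hu => mul_ne_zero (mul_ne_zero (pow_ne_zero 2 hs0.ne')
          (pow_ne_zero 4 (hVne u hu))) hvL.ne'
    · exact (continuousOn_const.sub (continuousOn_const.div
        (continuousOn_const.mul (hVc.pow 3))
        (fun u hu => mul_ne_zero hs0.ne' (pow_ne_zero 3 (hVne u hu))))).abs
  obtain ⟨u₁, hu₁I, hu₁max⟩ := isCompact_Icc.exists_isMaxOn ⟨t1, hIt1⟩ hGGcont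
  set M := GG (V u₁) with hMdef
  have hMb : ∀ u ∈ Set.Icc t0 t1, GG (V u) ≤ M := fun u hu => hu₁max hu
  -- initial values
  have hV1pos : 0 < V t1 := hVpos t1 hIt1
  have hA1 : 0 ≤ A t1 := by simp only [hA]; linarith [hinit.1]
  have eB1 : Y t1 - (yL - E * (V t1 - vL)) = B t1 := by simp only [hB]; ring
  have eC1 : Y t1 - ((1 / s) * (1 / V t1 - 1 / vL) + yL) = -C t1 := by simp only [hC]; ring
  have hBC1 : 0 ≤ B t1 * C t1 := by
    have h := hinit.2
    rw [eB1, eC1] at h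
    linarith [h]
  have hsum1 : 0 ≤ B t1 + C t1 := by
    have hEs : E * s * vL ^ 2 < 1 := by
      have hprod : (E * (2 * vL)) * (s * (2 * vL ^ 2)) < (-yL + D) * (-yL - D) :=
        mul_lt_mul'' hE2' hs1' (by positivity) (by positivity)
      nlinarith [hprod, hD2, hvL]
    have h1 : E * (s * V t1 * vL) < 1 := by
      nlinarith [mul_nonneg (mul_pos (mul_pos hEpos hs0) hvL).le
        (sub_nonneg.2 hinit.1), hEs]
    have h2 : (0:ℝ) < s * V t1 * vL := by positivity
    have hfac : 0 ≤ 1 / (s * V t1 * vL) - E := by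
      rw [sub_nonneg]
      exact le_of_lt ((lt_div_iff₀ h2).2 h1)
    have hsum : B t1 + C t1 = (vL - V t1) * (1 / (s * V t1 * vL) - E) := by
      simp only [hB, hC]
      field_simp
      ring
    rw [hsum]
    exact mul_nonneg (by linarith [hinit.1]) hfac
  have hB1 : 0 ≤ B t1 := by
    by_contra h
    push_neg at h
    have hCpos : 0 < C t1 := by linarith
    linarith [mul_pos (neg_pos.2 h) hCpos, hBC1]
  have hC1 : 0 ≤ C t1 := by
    by_contra h
    push_neg at h
    have hBpos : 0 < B t1 := by linarith
    linarith [mul_pos hBpos (neg_pos.2 h), hBC1]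
  -- the main Gronwall-type claim
  have main : ∀ ε : ℝ, 0 < ε → ∀ u ∈ Set.Icc t0 t1,
      -(ε * Real.exp ((M + 1) * (t1 - u))) < A u ∧
      -(ε * Real.exp ((M + 1) * (t1 - u))) < B u ∧
      -(ε * Real.exp ((M + 1) * (t1 - u))) < C u := by
    intro ε hε
    obtain ⟨φ, hφ⟩ : ∃ φ : ℝ → ℝ, φ = fun u => ε * Real.exp ((M + 1) * (t1 - u)) :=
      ⟨_, rfl⟩
    have hφu : ∀ u : ℝ, φ u = ε * Real.exp ((M + 1) * (t1 - u)) := fun u => by rw [hφ]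
    have hφpos : ∀ u, 0 < φ u := fun u => by rw [hφu u]; positivity
    have hφder : ∀ u : ℝ, HasDerivAt φ (-(M + 1) * φ u) u := by
      intro u
      rw [hφ]
      have h1 : HasDerivAt (fun x : ℝ => (M + 1) * (t1 - x)) (-(M + 1)) u := by
        simpa using ((hasDerivAt_id u).const_sub t1).const_mul (M + 1)
      have h3 := (h1.exp).const_mul ε
      refine h3.congr_deriv ?_
      beta_reduce
      ring
    have hφcont : Continuous φ := by
      rw [hφ]; fun_prop
    obtain ⟨f, hf⟩ : ∃ f : ℝ → ℝ,
        f = fun u => min (A u + φ u) (min (B u + φ u) (C u + φ u)) := ⟨_, rfl⟩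
    have hfle : ∀ u, f u ≤ A u + φ u ∧ f u ≤ B u + φ u ∧ f u ≤ C u + φ u := by
      intro u
      rw [hf]
      exact ⟨min_le_left _ _, le_trans (min_le_right _ _) (min_le_left _ _),
        le_trans (min_le_right _ _) (min_le_right _ _)⟩
    set S : Set ℝ := {u | u ∈ Set.Icc t0 t1 ∧ f u ≤ 0} with hS
    have memS : ∀ x, x ∈ S ↔ x ∈ Set.Icc t0 t1 ∧ f x ≤ 0 := fun x => by rw [hS]; rfl
    suffices hSempty : S = ∅ by
      intro u hu
      have hu' : u ∉ S := by rw [hSempty]; exact Set.notMem_empty u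
      have hf0 : 0 < f u := lt_of_not_ge (fun h => hu' ((memS u).2 ⟨hu, h⟩))
      rw [hf] at hf0
      simp only [lt_min_iff] at hf0
      rw [← hφu u]
      exact ⟨by linarith [hf0.1], by linarith [hf0.2.1], by linarith [hf0.2.2]⟩
    by_contra hne
    have hSne : S.Nonempty := Set.nonempty_iff_ne_empty.2 hne
    have hfcont : ContinuousOn f (Set.Icc t0 t1) := by
      rw [hf]
      exact continuous_min.comp_continuousOn ((hAc.add hφcont.continuousOn).prodMk
        (continuous_min.comp_continuousOn ((hBc.add hφcont.continuousOn).prodMk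
          (hCc.add hφcont.continuousOn))))
    have hSclosed : IsClosed S := by
      have hSeq : S = Set.Icc t0 t1 ∩ f ⁻¹' Set.Iic 0 := by rw [hS]; rfl
      rw [hSeq]
      exact hfcont.preimage_isClosed_of_isClosed isClosed_Icc isClosed_Iic
    have hSbdd : BddAbove S := ⟨t1, fun x hx => ((memS x).1 hx).1.2⟩
    set σ := sSup S with hσdef
    have hσS := (memS σ).1 (hSclosed.csSup_mem hSne hSbdd)
    have hσI : σ ∈ Set.Icc t0 t1 := hσS.1
    have hvσ : 0 < V σ := hVpos σ hσI
    have hφσ : 0 < φ σ := hφpos σ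
    have hft1 : 0 < f t1 := by
      have hφt1 : φ t1 = ε := by rw [hφu t1]; simp
      rw [hf]
      simp only [lt_min_iff]
      exact ⟨by rw [hφt1]; linarith, by rw [hφt1]; linarith, by rw [hφt1]; linarith⟩
    have hσlt : σ < t1 := by
      rcases lt_or_eq_of_le hσI.2 with h | h
      · exact h
      · exfalso; rw [h] at hσS; linarith [hσS.2]
    have hafter : ∀ u, σ < u → u ≤ t1 → 0 < f u := by
      intro u h1 h2
      by_contra hle
      have huS : u ∈ S := (memS u).2 ⟨⟨le_trans hσI.1 h1.le, h2⟩, le_of_not_gt hle⟩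
      exact absurd (le_csSup hSbdd huS) (not_le.2 h1)
    have hgehelp : ∀ X : ℝ → ℝ, ContinuousOn X (Set.Icc t0 t1) →
        (∀ u, σ < u → u ≤ t1 → 0 < X u + φ u) → 0 ≤ X σ + φ σ := by
      intro X hXc hXpos
      have hne2 : (𝓝[Set.Ioc σ t1] σ).NeBot := by
        rw [← mem_closure_iff_nhdsWithin_neBot, closure_Ioc hσlt.ne]
        exact Set.left_mem_Icc.2 hσlt.le
      have hten : Filter.Tendsto (fun u => X u + φ u) (𝓝[Set.Ioc σ t1] σ)
          (𝓝 (X σ + φ σ)) := by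
        have hcw := (hXc.add hφcont.continuousOn) σ hσI
        exact hcw.mono_left (nhdsWithin_mono σ
          (fun x hx => ⟨le_trans hσI.1 hx.1.le, hx.2⟩))
      exact ge_of_tendsto hten
        (eventually_nhdsWithin_of_forall (fun u hu => (hXpos u hu.1 hu.2).le))
    have hAσ : 0 ≤ A σ + φ σ :=
      hgehelp A hAc (fun u h1 h2 => lt_of_lt_of_le (hafter u h1 h2) (hfle u).1)
    have hBσ : 0 ≤ B σ + φ σ :=
      hgehelp B hBc (fun u h1 h2 => lt_of_lt_of_le (hafter u h1 h2) (hfle u).2.1)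
    have hCσ : 0 ≤ C σ + φ σ :=
      hgehelp C hCc (fun u h1 h2 => lt_of_lt_of_le (hafter u h1 h2) (hfle u).2.2)
    have hmin0 : f σ ≤ 0 := hσS.2
    rw [hf] at hmin0
    have hGb : GG (V σ) ≤ M := hMb σ hσI
    have hp1 : 0 ≤ 1 / V σ := by positivity
    have hp2 : 0 ≤ |(E * vL + yL) / (vL * V σ) + s| := abs_nonneg _
    have hp3 : 0 ≤ -(vL * E ^ 2 + yL * E + 1) / (V σ * vL) :=
      div_nonneg (by linarith) (mul_nonneg hvσ.le hvL.le)
    have hp4 : 0 ≤ |s - E / V σ| := abs_nonneg _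
    have hp5 : 0 ≤ |(s ^ 2 * vL * (V σ) ^ 2 + s * yL * V σ + 1) /
        (s ^ 2 * (V σ) ^ 4 * vL)| := abs_nonneg _
    have hp6 : 0 ≤ |s - 1 / (s * (V σ) ^ 3)| := abs_nonneg _
    have hcases : A σ + φ σ ≤ 0 ∨ (B σ + φ σ ≤ 0 ∨ C σ + φ σ ≤ 0) := by
      rcases min_le_iff.1 hmin0 with h | h
      · exact Or.inl h
      · exact Or.inr (min_le_iff.1 h)
    rcases hcases with hcase | hcase | hcase
    · -- case A
      have hAeq : A σ = -φ σ := by linarith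
      have hd := (hAder σ hσI).add (hφder σ)
      have hpos := right_deriv_nonneg hσlt hd (fun u hu => by
        have h := hafter u hu.1 hu.2
        have h2 := (hfle u).1
        show A σ + φ σ ≤ A u + φ u
        linarith)
      have hBb : -(B σ) ≤ φ σ := by linarith
      have h1 : -(B σ) / V σ ≤ φ σ / V σ := (div_le_div_iff_of_pos_right hvσ).2 hBb
      have h2 : φ σ * ((E * vL + yL) / (vL * V σ) + s) ≤
          φ σ * |(E * vL + yL) / (vL * V σ) + s| :=
        mul_le_mul_of_nonneg_left (le_abs_self _) hφσ.le
      have h3 : 1 / V σ + |(E * vL + yL) / (vL * V σ) + s| ≤ GG (V σ) := by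
        simp only [hGG]
        linarith
      have h6 : φ σ * (1 / V σ + |(E * vL + yL) / (vL * V σ) + s|) ≤ φ σ * GG (V σ) :=
        mul_le_mul_of_nonneg_left h3 hφσ.le
      have h7 : φ σ * GG (V σ) ≤ φ σ * M := mul_le_mul_of_nonneg_left hGb hφσ.le
      have e1 : -(B σ / V σ + A σ * ((E * vL + yL) / (vL * V σ) + s))
          = -(B σ) / V σ + φ σ * ((E * vL + yL) / (vL * V σ) + s) := by
        rw [hAeq]; ring
      have h4 : φ σ / V σ = φ σ * (1 / V σ) := by ring
      have hbound : -(B σ / V σ + A σ * ((E * vL + yL) / (vL * V σ) + s)) ≤ M * φ σ := by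
        rw [e1]
        linarith [h1, h2, h4, h6, h7]
      linarith [hpos, hbound, hφσ]
    · -- case B
      have hBeq : B σ = -φ σ := by linarith
      have hd := (hBder σ hσI).add (hφder σ)
      have hpos := right_deriv_nonneg hσlt hd (fun u hu => by
        have h := hafter u hu.1 hu.2
        have h2 := (hfle u).2.1
        show B σ + φ σ ≤ B u + φ u
        linarith)
      have hAb : -(A σ) ≤ φ σ := by linarith
      have h1 : -((-(vL * E ^ 2 + yL * E + 1) / (V σ * vL)) * A σ) ≤
          (-(vL * E ^ 2 + yL * E + 1) / (V σ * vL)) * φ σ := by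
        have := mul_le_mul_of_nonneg_left hAb hp3
        linarith [this]
      have h2 : (s - E / V σ) * φ σ ≤ |s - E / V σ| * φ σ :=
        mul_le_mul_of_nonneg_right (le_abs_self _) hφσ.le
      have h3 : -(vL * E ^ 2 + yL * E + 1) / (V σ * vL) + |s - E / V σ| ≤ GG (V σ) := by
        simp only [hGG]
        linarith
      have e1 : -((s - E / V σ) * B σ) = (s - E / V σ) * φ σ := by rw [hBeq]; ring
      have h6 : (-(vL * E ^ 2 + yL * E + 1) / (V σ * vL) + |s - E / V σ|) * φ σ ≤
          GG (V σ) * φ σ := mul_le_mul_of_nonneg_right h3 hφσ.le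
      have h7 : GG (V σ) * φ σ ≤ M * φ σ := mul_le_mul_of_nonneg_right hGb hφσ.le
      have hbound : -((-(vL * E ^ 2 + yL * E + 1) / (V σ * vL)) * A σ
          + (s - E / V σ) * B σ) ≤ M * φ σ := by
        linarith [h1, h2, h6, h7, e1]
      linarith [hpos, hbound, hφσ]
    · -- case C
      have hCeq : C σ = -φ σ := by linarith
      have hd := (hCder σ hσI).add (hφder σ)
      have hpos := right_deriv_nonneg hσlt hd (fun u hu => by
        have h := hafter u hu.1 hu.2
        have h2 := (hfle u).2.2
        show C σ + φ σ ≤ C u + φ u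
        linarith)
      have hAb : -(A σ) ≤ φ σ := by linarith
      set QQ := (s ^ 2 * vL * (V σ) ^ 2 + s * yL * V σ + 1) /
          (s ^ 2 * (V σ) ^ 4 * vL) with hQQ
      have h1 : -(QQ * A σ) ≤ |QQ| * φ σ := by
        rcases le_or_gt 0 QQ with hq | hq
        · have h' := mul_le_mul_of_nonneg_left hAb hq
          rw [abs_of_nonneg hq]
          linarith [h']
        · have hden : 0 < s ^ 2 * (V σ) ^ 4 * vL := by positivity
          have hnum : s ^ 2 * vL * (V σ) ^ 2 + s * yL * V σ + 1 < 0 := by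
            rcases div_neg_iff.1 hq with ⟨h1', h2'⟩ | ⟨h1', h2'⟩
            · linarith
            · exact h1'
          have hVgt : vL < V σ := by
            by_contra hle
            push_neg at hle
            linarith [key2 (V σ) hvσ hle]
          have hAneg : A σ < 0 := by simp only [hA]; linarith
          have hprod : 0 < QQ * A σ := mul_pos_of_neg_of_neg hq hAneg
          linarith [mul_nonneg (abs_nonneg QQ) hφσ.le]
      have h2 : (s - 1 / (s * (V σ) ^ 3)) * φ σ ≤ |s - 1 / (s * (V σ) ^ 3)| * φ σ :=
        mul_le_mul_of_nonneg_right (le_abs_self _) hφσ.le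
      have h3 : |QQ| + |s - 1 / (s * (V σ) ^ 3)| ≤ GG (V σ) := by
        simp only [hGG]
        rw [hQQ]
        linarith
      have e1 : -((s - 1 / (s * (V σ) ^ 3)) * C σ) = (s - 1 / (s * (V σ) ^ 3)) * φ σ := by
        rw [hCeq]; ring
      have h6 : (|QQ| + |s - 1 / (s * (V σ) ^ 3)|) * φ σ ≤ GG (V σ) * φ σ :=
        mul_le_mul_of_nonneg_right h3 hφσ.le
      have h7 : GG (V σ) * φ σ ≤ M * φ σ := mul_le_mul_of_nonneg_right hGb hφσ.le
      have hbound : -(QQ * A σ + (s - 1 / (s * (V σ) ^ 3)) * C σ) ≤ M * φ σ := by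
        linarith [h1, h2, h6, h7, e1]
      linarith [hpos, hbound, hφσ]
  -- pass to the limit ε → 0
  have hlim : ∀ X : ℝ → ℝ,
      (∀ ε : ℝ, 0 < ε → ∀ u ∈ Set.Icc t0 t1,
        -(ε * Real.exp ((M + 1) * (t1 - u))) < X u) →
      ∀ u ∈ Set.Icc t0 t1, 0 ≤ X u := by
    intro X hX u hu
    by_contra hneg
    push_neg at hneg
    have hcpos : 0 < Real.exp ((M + 1) * (t1 - u)) := Real.exp_pos _
    have hε : 0 < -X u / (2 * Real.exp ((M + 1) * (t1 - u))) :=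
      div_pos (by linarith) (by positivity)
    have h2 := hX _ hε u hu
    have he : -X u / (2 * Real.exp ((M + 1) * (t1 - u))) *
        Real.exp ((M + 1) * (t1 - u)) = -X u / 2 := by
      field_simp
    rw [he] at h2
    linarith
  have hA0 : ∀ u ∈ Set.Icc t0 t1, 0 ≤ A u :=
    hlim A (fun ε hε u hu => (main ε hε u hu).1)
  have hB0 : ∀ u ∈ Set.Icc t0 t1, 0 ≤ B u :=
    hlim B (fun ε hε u hu => (main ε hε u hu).2.1)
  have hC0 : ∀ u ∈ Set.Icc t0 t1, 0 ≤ C u :=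
    hlim C (fun ε hε u hu => (main ε hε u hu).2.2)
  intro t ht
  constructor
  · have := hA0 t ht
    simp only [hA] at this
    linarith
  · have e1 : Y t - (yL - E * (V t - vL)) = B t := by simp only [hB]; ring
    have e2 : Y t - ((1 / s) * (1 / V t - 1 / vL) + yL) = -C t := by simp only [hC]; ring
    rw [e1, e2]
    linarith [mul_nonneg (hB0 t ht) (hC0 t ht)]
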